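/- arXiv:2603.08831 — 2 statements merged into one kernel-verified Lean document; each statement's English description precedes it below -/
import Mathlib

section
/- Under the gradient update law with stability condition: if there exists ζ > 0 such that λ_min(2λ I - λ² Γ(t) Γ(t)ᵀ) ≥ ζ for all t ∈ ℕ, then ∑_{t=0}^∞ ‖x̃(t+1)‖² ≤ V(0)/ζ, where V(0) = ‖θ - θ̂(0)‖² and x̃(t+1) = Γ(t)(θ - θ̂(t)). -/
open Matrix

noncomputable def eunorm {n : ℕ} (v : Fin n → ℝ) : ℝ := Real.sqrt (v ⬝ᵥ v)


lemma dp_self_nonneg {n : ℕ} (v : Fin n → ℝ) : 0 ≤ v ⬝ᵥ v :=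
  Finset.sum_nonneg fun _ _ => mul_self_nonneg _

lemma quad_lower {n : ℕ} {M : Matrix (Fin n) (Fin n) ℝ} (hM : M.IsHermitian) {ζ : ℝ}
    (h : ∀ i, ζ ≤ hM.eigenvalues i) (x : Fin n → ℝ) :
    ζ * (x ⬝ᵥ x) ≤ x ⬝ᵥ (M *ᵥ x) := by
  set U : Matrix (Fin n) (Fin n) ℝ := (hM.eigenvectorUnitary : Matrix (Fin n) (Fin n) ℝ) with hU
  set y : Fin n → ℝ := Uᵀ *ᵥ x with hy
  have hstar : star U = Uᵀ := rfl
  have hUU : U * Uᵀ = 1 := by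
    have := (Matrix.mem_unitaryGroup_iff).mp hM.eigenvectorUnitary.2
    rwa [hstar] at this
  have hyy : y ⬝ᵥ y = x ⬝ᵥ x := by
    rw [hy, mulVec_transpose]
    nth_rewrite 2 [← mulVec_transpose]
    rw [dotProduct_mulVec, vecMul_vecMul, hUU, vecMul_one]
  have hquad : x ⬝ᵥ (M *ᵥ x) = ∑ i, hM.eigenvalues i * (y i * y i) := by
    conv_lhs => rw [hM.spectral_theorem, Unitary.conjStarAlgAut_apply]
    rw [hstar, ← mulVec_mulVec, ← mulVec_mulVec, dotProduct_mulVec, ← mulVec_transpose, ← hy]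
    rw [dotProduct]
    refine Finset.sum_congr rfl fun i _ => ?_
    rw [mulVec_diagonal]
    simp only [Function.comp_apply, RCLike.ofReal_real_eq_id, id]
    ring
  rw [hquad, ← hyy, dotProduct, Finset.mul_sum]
  exact Finset.sum_le_sum fun i _ => mul_le_mul_of_nonneg_right (h i) (mul_self_nonneg _)

/-- Uniform lower bound on `λ_min(2λI - λ²ΓΓᵀ)` implies square-summability of the
state estimation error with `∑ ‖x̃(t+1)‖² ≤ V(0)/ζ`. -/
theorem stmt_3 {n p : ℕ} (lam ζ : ℝ) (hlam : 0 < lam) (hζ : 0 < ζ)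
    (Γ : ℕ → Matrix (Fin n) (Fin p) ℝ)
    (θ : Fin p → ℝ) (θhat : ℕ → Fin p → ℝ) (xtil : ℕ → Fin n → ℝ)
    (hx : ∀ t, xtil (t + 1) = (Γ t).mulVec (θ - θhat t))
    (hupd : ∀ t, θhat (t + 1) = θhat t + lam • (Γ t)ᵀ.mulVec (xtil (t + 1)))
    (hM : ∀ t, ((2 * lam) • (1 : Matrix (Fin n) (Fin n) ℝ)
      - lam ^ 2 • (Γ t * (Γ t)ᵀ)).IsHermitian)
    (heig : ∀ t i, ζ ≤ (hM t).eigenvalues i) :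
    Summable (fun t => (eunorm (xtil (t + 1)))^2) ∧
      ∑' t, (eunorm (xtil (t + 1)))^2 ≤ (eunorm (θ - θhat 0))^2 / ζ := by
  set e : ℕ → Fin p → ℝ := fun t => θ - θhat t with he
  set V : ℕ → ℝ := fun t => e t ⬝ᵥ e t with hV
  set g : ℕ → ℝ := fun t => xtil (t + 1) ⬝ᵥ xtil (t + 1) with hg
  have hgnn : ∀ t, 0 ≤ g t := fun t => dp_self_nonneg _
  have hVnn : ∀ t, 0 ≤ V t := fun t => dp_self_nonneg _
  -- key descent inequality
  have key : ∀ t, V (t + 1) + ζ * g t ≤ V t := by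
    intro t
    set x : Fin n → ℝ := xtil (t + 1) with hxdef
    have hxe : x = (Γ t) *ᵥ (e t) := hx t
    have hestep : e (t + 1) = e t - lam • ((Γ t)ᵀ *ᵥ x) := by
      simp only [he, hupd t]
      funext i; simp; ring
    have hew : e t ⬝ᵥ ((Γ t)ᵀ *ᵥ x) = x ⬝ᵥ x := by
      rw [dotProduct_mulVec, vecMul_transpose, ← hxe]
    have hww : ((Γ t)ᵀ *ᵥ x) ⬝ᵥ ((Γ t)ᵀ *ᵥ x) = x ⬝ᵥ ((Γ t * (Γ t)ᵀ) *ᵥ x) := by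
      rw [← mulVec_mulVec]
      conv_rhs => rw [dotProduct_mulVec, ← mulVec_transpose]
    have hVstep : V (t + 1) = V t - x ⬝ᵥ (((2 * lam) • (1 : Matrix (Fin n) (Fin n) ℝ)
        - lam ^ 2 • (Γ t * (Γ t)ᵀ)) *ᵥ x) := by
      have : V (t + 1) = V t - 2 * lam * (x ⬝ᵥ x)
          + lam ^ 2 * (x ⬝ᵥ ((Γ t * (Γ t)ᵀ) *ᵥ x)) := by
        rw [hV]
        simp only [hestep, dotProduct_sub, sub_dotProduct, smul_dotProduct, dotProduct_smul,
          smul_eq_mul, hew, ← hww, dotProduct_comm ((lam • ((Γ t)ᵀ *ᵥ x))) (e t),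
          dotProduct_smul, smul_eq_mul, hew]
        ring
      rw [this]
      rw [sub_mulVec, smul_mulVec, smul_mulVec, one_mulVec, dotProduct_sub,
        dotProduct_smul, dotProduct_smul, smul_eq_mul, smul_eq_mul]
      ring
    have hq := quad_lower (hM t) (heig t) x
    rw [hVstep]
    linarith
  -- partial sums bounded
  have hpartial : ∀ N, V N + ζ * ∑ t ∈ Finset.range N, g t ≤ V 0 := by
    intro N
    induction N with
    | zero => simp
    | succ N ih =>
      rw [Finset.sum_range_succ, mul_add]
      have := key N
      linarith
  have hbound : ∀ N, ∑ t ∈ Finset.range N, g t ≤ V 0 / ζ := by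
    intro N
    rw [le_div_iff₀ hζ]
    nlinarith [hpartial N, hVnn N]
  have hgeq : (fun t => (eunorm (xtil (t + 1)))^2) = g := by
    funext t
    rw [eunorm, Real.sq_sqrt (dp_self_nonneg _)]
  have hV0 : (eunorm (θ - θhat 0))^2 = V 0 := by
    rw [eunorm, Real.sq_sqrt (dp_self_nonneg _)]
  rw [hgeq, hV0]
  have hs : Summable g := summable_of_sum_range_le hgnn hbound
  exact ⟨hs, Real.tsum_le_of_sum_range_le hgnn hbound⟩
end

section
/- Under the gradient update law with the uniform stability condition λ_min(2λ I - λ² Γ(t) Γ(t)ᵀ) ≥ ζ > 0 for all t, the state estimation error converges to zero: lim_{t→∞} x̃(t) = 0, where x̃(t+1) = Γ(t)(θ - θ̂(t)). -/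
open Matrix Filter

lemma quad_ge_stmt4 {m : ℕ} {M : Matrix (Fin m) (Fin m) ℝ} (hM : M.IsHermitian) {ζ : ℝ}
    (h : ∀ i, ζ ≤ hM.eigenvalues i) (x : Fin m → ℝ) :
    ζ * (x ⬝ᵥ x) ≤ x ⬝ᵥ M *ᵥ x := by
  set U : Matrix (Fin m) (Fin m) ℝ := (hM.eigenvectorUnitary : Matrix (Fin m) (Fin m) ℝ) with hU
  have hstar : star U = Uᵀ := by
    ext i j
    simp [Matrix.star_eq_conjTranspose, Matrix.conjTranspose_apply]
  set y : Fin m → ℝ := star U *ᵥ x with hy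
  have hUU : U * star U = 1 := (Matrix.mem_unitaryGroup_iff).mp hM.eigenvectorUnitary.2
  have hxy : x ⬝ᵥ x = y ⬝ᵥ y := by
    calc x ⬝ᵥ x = x ⬝ᵥ ((U * star U) *ᵥ x) := by rw [hUU, Matrix.one_mulVec]
    _ = x ⬝ᵥ (U *ᵥ (star U *ᵥ x)) := by rw [Matrix.mulVec_mulVec]
    _ = (x ᵥ* U) ⬝ᵥ (star U *ᵥ x) := by rw [Matrix.dotProduct_mulVec]
    _ = y ⬝ᵥ y := by rw [hy, hstar, Matrix.mulVec_transpose]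
  have hquad : x ⬝ᵥ M *ᵥ x = ∑ i, hM.eigenvalues i * (y i) ^ 2 := by
    conv_lhs => rw [hM.spectral_theorem, Unitary.conjStarAlgAut_apply]
    rw [← Matrix.mulVec_mulVec, ← Matrix.mulVec_mulVec, Matrix.dotProduct_mulVec, ← hy]
    have : x ᵥ* U = y := by rw [hy, hstar, Matrix.mulVec_transpose]
    rw [this]
    simp [dotProduct, Matrix.mulVec_diagonal]
    exact Finset.sum_congr rfl fun i _ => by ring
  rw [hquad, hxy, dotProduct, Finset.mul_sum]
  refine Finset.sum_le_sum fun i _ => ?_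
  calc ζ * (y i * y i) ≤ hM.eigenvalues i * (y i) ^ 2 := by
        rw [← sq]; exact mul_le_mul_of_nonneg_right (h i) (sq_nonneg _)
  _ = _ := rfl

/-- Uniform stability condition `λ_min(2λI - λ²Γ(t)Γ(t)ᵀ) ≥ ζ > 0` implies that the
state estimation error `x̃(t)` converges to zero. -/
theorem stmt_4 {n p : ℕ} (lam ζ : ℝ) (hlam : 0 < lam) (hζ : 0 < ζ)
    (Γ : ℕ → Matrix (Fin n) (Fin p) ℝ)
    (θ : Fin p → ℝ) (θhat : ℕ → Fin p → ℝ) (xtil : ℕ → Fin n → ℝ)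
    (hx : ∀ t, xtil (t + 1) = (Γ t).mulVec (θ - θhat t))
    (hupd : ∀ t, θhat (t + 1) = θhat t + lam • (Γ t)ᵀ.mulVec (xtil (t + 1)))
    (hM : ∀ t, ((2 * lam) • (1 : Matrix (Fin n) (Fin n) ℝ)
      - lam ^ 2 • (Γ t * (Γ t)ᵀ)).IsHermitian)
    (heig : ∀ t i, ζ ≤ (hM t).eigenvalues i) :
    Tendsto xtil atTop (nhds 0) := by
  have expand : ∀ (u w : Fin p → ℝ) (c : ℝ),
      (u - c • w) ⬝ᵥ (u - c • w)
        = u ⬝ᵥ u - c * (w ⬝ᵥ u) - c * (u ⬝ᵥ w) + c ^ 2 * (w ⬝ᵥ w) := by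
    intro u w c
    rw [sub_dotProduct, dotProduct_sub, dotProduct_sub,
      smul_dotProduct, smul_dotProduct, dotProduct_smul,
      dotProduct_smul]
    simp only [smul_eq_mul]
    ring
  have hEnn : ∀ t, (0:ℝ) ≤ xtil (t + 1) ⬝ᵥ xtil (t + 1) := fun t =>
    Finset.sum_nonneg fun i _ => mul_self_nonneg _
  have hVnn : ∀ t, (0:ℝ) ≤ (θ - θhat t) ⬝ᵥ (θ - θhat t) := fun t =>
    Finset.sum_nonneg fun i _ => mul_self_nonneg _
  -- key Lyapunov decrement
  have key : ∀ t, (θ - θhat (t + 1)) ⬝ᵥ (θ - θhat (t + 1))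
      + ζ * (xtil (t + 1) ⬝ᵥ xtil (t + 1)) ≤ (θ - θhat t) ⬝ᵥ (θ - θhat t) := by
    intro t
    have hφ1 : θ - θhat (t + 1)
        = (θ - θhat t) - lam • ((Γ t)ᵀ *ᵥ xtil (t + 1)) := by
      rw [hupd t]
      ext i
      simp [sub_sub]
    have hba : ((Γ t)ᵀ *ᵥ xtil (t + 1)) ⬝ᵥ (θ - θhat t)
        = xtil (t + 1) ⬝ᵥ xtil (t + 1) := by
      rw [Matrix.mulVec_transpose, ← Matrix.dotProduct_mulVec, ← hx t]
    have hφb : (θ - θhat t) ⬝ᵥ ((Γ t)ᵀ *ᵥ xtil (t + 1))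
        = xtil (t + 1) ⬝ᵥ xtil (t + 1) := by
      rw [dotProduct_comm, hba]
    have hbb : xtil (t + 1) ⬝ᵥ ((Γ t * (Γ t)ᵀ) *ᵥ xtil (t + 1))
        = ((Γ t)ᵀ *ᵥ xtil (t + 1)) ⬝ᵥ ((Γ t)ᵀ *ᵥ xtil (t + 1)) := by
      rw [← Matrix.mulVec_mulVec, Matrix.dotProduct_mulVec, ← Matrix.mulVec_transpose]
    have hq := quad_ge_stmt4 (hM t) (heig t) (xtil (t + 1))
    have hMa : xtil (t + 1) ⬝ᵥ (((2 * lam) • (1 : Matrix (Fin n) (Fin n) ℝ)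
        - lam ^ 2 • (Γ t * (Γ t)ᵀ)) *ᵥ xtil (t + 1))
        = 2 * lam * (xtil (t + 1) ⬝ᵥ xtil (t + 1))
          - lam ^ 2 * (xtil (t + 1) ⬝ᵥ ((Γ t * (Γ t)ᵀ) *ᵥ xtil (t + 1))) := by
      rw [Matrix.sub_mulVec, dotProduct_sub, Matrix.smul_mulVec,
        Matrix.smul_mulVec, Matrix.one_mulVec, dotProduct_smul,
        dotProduct_smul]
      simp only [smul_eq_mul]
    rw [hMa] at hq
    have hVexp : (θ - θhat (t + 1)) ⬝ᵥ (θ - θhat (t + 1))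
        = (θ - θhat t) ⬝ᵥ (θ - θhat t)
          - 2 * lam * (xtil (t + 1) ⬝ᵥ xtil (t + 1))
          + lam ^ 2 * (xtil (t + 1) ⬝ᵥ ((Γ t * (Γ t)ᵀ) *ᵥ xtil (t + 1))) := by
      rw [hφ1, expand, hba, hφb, hbb]
      ring
    rw [hVexp]
    linarith
  set V : ℕ → ℝ := fun t => (θ - θhat t) ⬝ᵥ (θ - θhat t) with hV
  set E : ℕ → ℝ := fun t => xtil (t + 1) ⬝ᵥ xtil (t + 1) with hE
  have hanti : Antitone V := antitone_nat_of_succ_le fun t => by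
    have h1 := key t
    have h2 := mul_nonneg hζ.le (hEnn t)
    simp only [hV]
    linarith
  have hbdd : BddBelow (Set.range V) := ⟨0, fun x ⟨t, ht⟩ => ht ▸ hVnn t⟩
  have hVlim : Tendsto V atTop (nhds (⨅ t, V t)) :=
    tendsto_atTop_ciInf hanti hbdd
  have hVlim' : Tendsto (fun t => V (t + 1)) atTop (nhds (⨅ t, V t)) :=
    (tendsto_add_atTop_iff_nat 1).mpr hVlim
  have hdiff : Tendsto (fun t => V t - V (t + 1)) atTop (nhds 0) := by
    have := hVlim.sub hVlim'
    simpa using this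
  have hEten : Tendsto E atTop (nhds 0) := by
    have hsq : Tendsto (fun t => ζ * E t) atTop (nhds 0) := by
      refine tendsto_of_tendsto_of_tendsto_of_le_of_le tendsto_const_nhds hdiff
        (fun t => mul_nonneg hζ.le (hEnn t)) (fun t => by
          have := key t
          simp only [hV, hE]
          linarith)
    have := hsq.const_mul (ζ⁻¹)
    simpa [← mul_assoc, inv_mul_cancel₀ hζ.ne'] using this
  -- coordinatewise convergence
  rw [tendsto_pi_nhds]
  intro i
  rw [← tendsto_add_atTop_iff_nat 1]
  have hsqrt : Tendsto (fun t => Real.sqrt (E t)) atTop (nhds 0) := by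
    have := (Real.continuous_sqrt.tendsto 0).comp hEten
    simpa [Function.comp_def] using this
  have hbound : ∀ t, |xtil (t + 1) i| ≤ Real.sqrt (E t) := by
    intro t
    rw [← Real.sqrt_sq_eq_abs]
    apply Real.sqrt_le_sqrt
    rw [sq]
    exact Finset.single_le_sum (f := fun j => xtil (t + 1) j * xtil (t + 1) j)
      (fun j _ => mul_self_nonneg _) (Finset.mem_univ i)
  have hneg : Tendsto (fun t => -Real.sqrt (E t)) atTop (nhds 0) := by
    simpa using hsqrt.neg
  refine tendsto_of_tendsto_of_tendsto_of_le_of_le hneg hsqrt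
    (fun t => neg_le_of_abs_le (hbound t)) (fun t => le_of_abs_le (hbound t))
end
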